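/- With the same setup as the unfolding integration identity, for 1 ≤ p < ∞ and φ ∈ L^p(R^ε), T_ε φ ∈ L^p((0,1)×Y*) and ‖T_ε φ‖_{L^p((0,1)×Y*)} = (L/ε)^{1/p} ‖φ‖_{L^p(R^ε_0)} ≤ (L/ε)^{1/p} ‖φ‖_{L^p(R^ε)}. -/

import Mathlib

open MeasureTheory Set
open scoped ENNReal

namespace Stmt13Aux

theorem smul_prod_meas {α β : Type*} [MeasurableSpace α] [MeasurableSpace β]
    (r : ℝ≥0∞) (μ : Measure α) (ν : Measure β) [SFinite ν] :
    (r • μ).prod ν = r • μ.prod ν := by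
  ext s hs
  rw [Measure.smul_apply, Measure.prod_apply hs, Measure.prod_apply hs,
    MeasureTheory.lintegral_smul_measure, smul_eq_mul]

theorem prod_smul_meas {α β : Type*} [MeasurableSpace α] [MeasurableSpace β]
    (r : ℝ≥0∞) (μ : Measure α) (ν : Measure β) [SFinite ν] :
    μ.prod (r • ν) = r • μ.prod ν := by
  ext s hs
  rw [Measure.smul_apply, Measure.prod_apply hs, Measure.prod_apply hs, smul_eq_mul,
    ← MeasureTheory.lintegral_const_mul _ (measurable_measure_prodMk_left hs)]
  simp [Measure.smul_apply]

theorem map_affine_volume {c : ℝ} (hc : 0 < c) (a : ℝ) :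
    Measure.map (fun x : ℝ => a + c * x) volume = ENNReal.ofReal c⁻¹ • volume := by
  have h1 : (fun x : ℝ => a + c * x) = (fun x : ℝ => a + x) ∘ (fun x : ℝ => c * x) := rfl
  rw [h1, ← Measure.map_map (measurable_const_add a) (measurable_const_mul c),
    Real.map_volume_mul_left (ne_of_gt hc), Measure.map_smul,
    map_add_left_eq_self volume a, abs_of_pos (inv_pos.mpr hc)]

theorem map_psi_volume {c e : ℝ} (hc : 0 < c) (he : 0 < e) (a : ℝ) :
    Measure.map (fun y : ℝ × ℝ => (a + c * y.1, e * y.2)) volume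
      = ENNReal.ofReal (c * e)⁻¹ • volume := by
  have h1 : (fun y : ℝ × ℝ => (a + c * y.1, e * y.2))
      = Prod.map (fun x : ℝ => a + c * x) (fun y : ℝ => e * y) := rfl
  have h2 : Measure.map (fun x : ℝ => e * x) volume = ENNReal.ofReal e⁻¹ • volume := by
    simpa using map_affine_volume he 0
  have hm1 : Measurable (fun x : ℝ => a + c * x) := (measurable_const_mul c).const_add a
  have hm2 : Measurable (fun x : ℝ => e * x) := measurable_const_mul e
  rw [Measure.volume_eq_prod, h1, ← Measure.map_prod_map _ _ hm1 hm2,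
    map_affine_volume hc a, h2, smul_prod_meas, prod_smul_meas, smul_smul,
    ← ENNReal.ofReal_mul (inv_nonneg.mpr hc.le), ← mul_inv, ← Measure.volume_eq_prod]



theorem vol_eq_smul_map {c e : ℝ} (hc : 0 < c) (he : 0 < e) (a : ℝ) :
    (volume : Measure (ℝ × ℝ)) = ENNReal.ofReal (c * e) •
      Measure.map (fun y : ℝ × ℝ => (a + c * y.1, e * y.2)) volume := by
  have hce : 0 < c * e := mul_pos hc he
  rw [map_psi_volume hc he a, smul_smul, ← ENNReal.ofReal_mul hce.le,
    mul_inv_cancel₀ (ne_of_gt hce), ENNReal.ofReal_one, one_smul]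

theorem cov_setIntegral {c e : ℝ} (hc : 0 < c) (he : 0 < e) (a : ℝ)
    {f : ℝ × ℝ → ℝ} (hf : Measurable f) {S : Set (ℝ × ℝ)} (hS : MeasurableSet S) :
    (∫ z in S, f z) = (c * e) *
      ∫ y in (fun y : ℝ × ℝ => (a + c * y.1, e * y.2)) ⁻¹' S, f (a + c * y.1, e * y.2) := by
  have hce : 0 < c * e := mul_pos hc he
  have hψ : Measurable (fun y : ℝ × ℝ => (a + c * y.1, e * y.2)) :=
    ((measurable_fst.const_mul c).const_add a).prodMk (measurable_snd.const_mul e)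
  conv_lhs => rw [vol_eq_smul_map hc he a]
  rw [Measure.restrict_smul, integral_smul_measure,
    setIntegral_map hS hf.aestronglyMeasurable hψ.aemeasurable,
    ENNReal.toReal_ofReal hce.le, smul_eq_mul]

theorem cov_integrableOn {c e : ℝ} (hc : 0 < c) (he : 0 < e) (a : ℝ)
    {f : ℝ × ℝ → ℝ} (hf : Measurable f) {S : Set (ℝ × ℝ)} (hS : MeasurableSet S) :
    IntegrableOn f S ↔ IntegrableOn (fun y : ℝ × ℝ => f (a + c * y.1, e * y.2))
      ((fun y : ℝ × ℝ => (a + c * y.1, e * y.2)) ⁻¹' S) := by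
  have hce : 0 < c * e := mul_pos hc he
  have hψ : Measurable (fun y : ℝ × ℝ => (a + c * y.1, e * y.2)) :=
    ((measurable_fst.const_mul c).const_add a).prodMk (measurable_snd.const_mul e)
  rw [IntegrableOn]
  conv_lhs => rw [vol_eq_smul_map hc he a]
  rw [Measure.restrict_smul,
    integrable_smul_measure (by simp [ENNReal.ofReal_eq_zero, not_le, hce]) ENNReal.ofReal_ne_top,
    Measure.restrict_map hψ hS,
    integrable_map_measure hf.aestronglyMeasurable hψ.aemeasurable]
  rfl


theorem null_fst {β : Type*} [MeasureSpace β] [SFinite (volume : Measure β)] (a : ℝ) :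
    (volume : Measure (ℝ × β)) {p : ℝ × β | p.1 = a} = 0 := by
  have h : {p : ℝ × β | p.1 = a} = ({a} : Set ℝ) ×ˢ (univ : Set β) := by
    ext ⟨x, y⟩; simp [Set.mem_prod, eq_comm]
  rw [h, Measure.volume_eq_prod, Measure.prod_prod]
  simp

theorem iUnion_Ico_mul {M : ℝ} (hM : 0 ≤ M) (n : ℕ) :
    (⋃ k ∈ Finset.range n, Ico ((k : ℝ) * M) (((k : ℝ) + 1) * M)) = Ico 0 ((n : ℝ) * M) := by
  induction n with
  | zero => simp
  | succ n ih =>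
    rw [Finset.range_add_one]
    rw [Finset.set_biUnion_insert, ih, union_comm,
      Ico_union_Ico_eq_Ico (by positivity) (by push_cast; nlinarith)]
    push_cast
    ring_nf

theorem per_nat {g : ℝ → ℝ} {L : ℝ} (hgper : ∀ x, g (x + L) = g x) (k : ℕ) (x : ℝ) :
    g (x + (k : ℝ) * L) = g x := by
  induction k with
  | zero => simp
  | succ k ih =>
    push_cast
    rw [add_mul, one_mul, ← add_assoc, hgper, ih]

theorem floor_cell {M : ℝ} (hM : 0 < M) (k : ℕ) {x : ℝ}
    (hx : x ∈ Ico ((k : ℝ) * M) (((k : ℝ) + 1) * M)) : ⌊x / M⌋ = (k : ℤ) := by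
  rw [Int.floor_eq_iff]
  constructor
  · push_cast
    rw [le_div_iff₀ hM]
    linarith [hx.1]
  · push_cast
    rw [div_lt_iff₀ hM]
    linarith [hx.2]

end Stmt13Aux

open Stmt13Aux

open Stmt13Aux

set_option maxHeartbeats 2000000 in
theorem stmt13 (g : ℝ → ℝ) (L g0 g1 : ℝ) (hL : 0 < L)
    (hgc : Continuous g) (hgper : ∀ x, g (x + L) = g x)
    (hg0 : 0 < g0) (hg : ∀ x, g0 ≤ g x ∧ g x ≤ g1)
    (α ε : ℝ) (hα : 0 < α) (hε : 0 < ε)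
    (N : ℕ) (hN : ε ^ α * L * (N + 1) ≤ 1)
    (hNmax : ∀ m : ℕ, ε ^ α * L * (m + 1) ≤ 1 → m ≤ N)
    (p : ℝ) (hp : 1 ≤ p)
    (φ : ℝ × ℝ → ℝ) (hφm : Measurable φ)
    (hφ : IntegrableOn (fun z => |φ z| ^ p)
      {z : ℝ × ℝ | 0 < z.1 ∧ z.1 < 1 ∧ 0 < z.2 ∧ z.2 < ε * g (z.1 / ε ^ α)}) :
    IntegrableOn (fun q : ℝ × ℝ × ℝ =>
        |if q.1 ∈ Ioo (0:ℝ) (ε ^ α * L * (N + 1)) then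
            φ (ε ^ α * (⌊q.1 / ε ^ α / L⌋ : ℝ) * L + ε ^ α * q.2.1, ε * q.2.2)
          else 0| ^ p)
      {q : ℝ × ℝ × ℝ |
        q.1 ∈ Ioo (0:ℝ) 1 ∧ 0 < q.2.1 ∧ q.2.1 < L ∧ 0 < q.2.2 ∧ q.2.2 < g q.2.1} ∧
    (∫ q in {q : ℝ × ℝ × ℝ |
        q.1 ∈ Ioo (0:ℝ) 1 ∧ 0 < q.2.1 ∧ q.2.1 < L ∧ 0 < q.2.2 ∧ q.2.2 < g q.2.1},
        |if q.1 ∈ Ioo (0:ℝ) (ε ^ α * L * (N + 1)) then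
            φ (ε ^ α * (⌊q.1 / ε ^ α / L⌋ : ℝ) * L + ε ^ α * q.2.1, ε * q.2.2)
          else 0| ^ p) ^ (1 / p)
      = (L / ε) ^ (1 / p) *
        (∫ z in {z : ℝ × ℝ | z.1 ∈ Ioo (0:ℝ) (ε ^ α * L * (N + 1)) ∧
            0 < z.2 ∧ z.2 < ε * g (z.1 / ε ^ α)}, |φ z| ^ p) ^ (1 / p) ∧
    (L / ε) ^ (1 / p) *
        (∫ z in {z : ℝ × ℝ | z.1 ∈ Ioo (0:ℝ) (ε ^ α * L * (N + 1)) ∧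
            0 < z.2 ∧ z.2 < ε * g (z.1 / ε ^ α)}, |φ z| ^ p) ^ (1 / p)
      ≤ (L / ε) ^ (1 / p) *
        (∫ z in {z : ℝ × ℝ | 0 < z.1 ∧ z.1 < 1 ∧ 0 < z.2 ∧
            z.2 < ε * g (z.1 / ε ^ α)}, |φ z| ^ p) ^ (1 / p) := by
  have hc : (0:ℝ) < ε ^ α := Real.rpow_pos_of_pos hε α
  set c := ε ^ α with hcdef
  set M := c * L with hMdef
  have hM : 0 < M := mul_pos hc hL
  have hp0 : (0:ℝ) < p := lt_of_lt_of_le one_pos hp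
  have hE1 : M * (↑N + 1) ≤ 1 := hN
  set Y : Set (ℝ × ℝ) := {y : ℝ × ℝ | 0 < y.1 ∧ y.1 < L ∧ 0 < y.2 ∧ y.2 < g y.1} with hYdef
  set YI : Set (ℝ × ℝ) := {y : ℝ × ℝ | 0 ≤ y.1 ∧ y.1 < L ∧ 0 < y.2 ∧ y.2 < g y.1} with hYIdef
  set G : ℝ × ℝ × ℝ → ℝ :=
    fun q => |φ (c * (⌊q.1 / c / L⌋ : ℝ) * L + c * q.2.1, ε * q.2.2)| ^ p with hGdef
  set F : ℝ × ℝ → ℝ := fun z => |φ z| ^ p with hFdef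
  set strip : ℕ → Set (ℝ × ℝ) := fun k =>
    {z : ℝ × ℝ | z.1 ∈ Ico ((k:ℝ) * M) (((k:ℝ)+1) * M) ∧ 0 < z.2 ∧ z.2 < ε * g (z.1 / c)}
    with hstripdef
  set cell : ℕ → Set ℝ := fun k => Ico ((k:ℝ) * M) (((k:ℝ)+1) * M) with hcelldef
  set H : ℕ → ℝ × ℝ → ℝ := fun k y => F ((k:ℝ) * M + c * y.1, ε * y.2) with hHdef
  -- measurability
  have hFm : Measurable F :=
    (Real.continuous_rpow_const hp0.le).measurable.comp hφm.abs
  have hYm : MeasurableSet Y := by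
    rw [hYdef]
    simp only [setOf_and]
    exact (measurableSet_lt measurable_const measurable_fst).inter
      ((measurableSet_lt measurable_fst measurable_const).inter
      ((measurableSet_lt measurable_const measurable_snd).inter
      (measurableSet_lt measurable_snd (hgc.measurable.comp measurable_fst))))
  have hYIm : MeasurableSet YI := by
    rw [hYIdef]
    simp only [setOf_and]
    exact (measurableSet_le measurable_const measurable_fst).inter
      ((measurableSet_lt measurable_fst measurable_const).inter
      ((measurableSet_lt measurable_const measurable_snd).inter
      (measurableSet_lt measurable_snd (hgc.measurable.comp measurable_fst))))
  have hGm : Measurable G := by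
    apply hFm.comp
    apply Measurable.prodMk
    · exact (((measurable_from_top.comp
        (((measurable_fst.div_const c).div_const L).floor)).const_mul c).mul_const L).add
        ((measurable_fst.comp measurable_snd).const_mul c)
    · exact (measurable_snd.comp measurable_snd).const_mul ε
  have hstripm : ∀ k : ℕ, MeasurableSet (strip k) := by
    intro k
    rw [hstripdef]
    simp only [setOf_and]
    exact (measurable_fst measurableSet_Ico).inter
      ((measurableSet_lt measurable_const measurable_snd).inter
      (measurableSet_lt measurable_snd
        ((hgc.measurable.comp (measurable_fst.div_const c)).const_mul ε)))
  -- strip k is a.e. inside the big thin domain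
  have hsub : ∀ k : ℕ, k < N + 1 → strip k ≤ᵐ[volume]
      {z : ℝ × ℝ | 0 < z.1 ∧ z.1 < 1 ∧ 0 < z.2 ∧ z.2 < ε * g (z.1 / c)} := by
    intro k hk
    rw [ae_le_set]
    apply measure_mono_null (t := {z : ℝ × ℝ | z.1 = 0}) _ (null_fst 0)
    intro z hz
    obtain ⟨⟨⟨h1, h2⟩, h3, h4⟩, h5⟩ := hz
    simp only [mem_setOf_eq]
    by_contra h0
    apply h5
    have hk' : (k:ℝ) + 1 ≤ (N:ℝ) + 1 := by
      have : (k:ℝ) ≤ N := by exact_mod_cast Nat.lt_succ_iff.mp hk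
      linarith
    refine ⟨lt_of_le_of_ne (le_trans (by positivity) h1) (Ne.symm h0), ?_, h3, h4⟩
    calc z.1 < ((k:ℝ)+1) * M := h2
      _ ≤ ((N:ℝ)+1) * M := by nlinarith
      _ = M * ((N:ℝ)+1) := by ring
      _ ≤ 1 := hE1
  have hstripInt : ∀ k : ℕ, k < N + 1 → IntegrableOn F (strip k) := fun k hk =>
    hφ.mono_set_ae (hsub k hk)
  -- preimage of strip k under the unfolding affine map
  have hpre : ∀ k : ℕ,
      (fun y : ℝ × ℝ => ((k:ℝ) * M + c * y.1, ε * y.2)) ⁻¹' (strip k) = YI := by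
    intro k
    ext y
    simp only [hstripdef, hYIdef, mem_preimage, mem_setOf_eq, mem_Ico]
    have harg : ((k:ℝ) * M + c * y.1) / c = y.1 + (k:ℝ) * L := by
      rw [hMdef]; field_simp; ring
    rw [harg, per_nat hgper k y.1]
    constructor
    · rintro ⟨⟨a1, a2⟩, a3, a4⟩
      refine ⟨by nlinarith, by nlinarith, ?_, by nlinarith⟩
      nlinarith
    · rintro ⟨a1, a2, a3, a4⟩
      refine ⟨⟨by nlinarith, by nlinarith⟩, by nlinarith, by nlinarith⟩
  have hcov : ∀ k : ℕ, (∫ z in strip k, F z) = (c * ε) * ∫ y in YI, H k y := by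
    intro k
    rw [cov_setIntegral hc hε ((k:ℝ) * M) hFm (hstripm k), hpre k, hHdef]
  have hHInt : ∀ k : ℕ, k < N + 1 → IntegrableOn (H k) YI := by
    intro k hk
    have := (cov_integrableOn hc hε ((k:ℝ) * M) hFm (hstripm k)).mp (hstripInt k hk)
    rwa [hpre k] at this
  have hYsubYI : Y ⊆ YI := by
    intro y hy
    exact ⟨hy.1.le, hy.2⟩
  have hYae : Y =ᵐ[volume] YI := by
    rw [MeasureTheory.ae_eq_set]
    constructor
    · have hYe : Y \ YI = ∅ := by rw [diff_eq_empty]; exact hYsubYI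
      rw [hYe]; exact measure_empty
    · apply measure_mono_null (t := {y : ℝ × ℝ | y.1 = 0}) _ (null_fst 0)
      rintro y ⟨⟨h0, h⟩, hy⟩
      simp only [mem_setOf_eq]
      by_contra hne
      exact hy ⟨lt_of_le_of_ne h0 (Ne.symm hne), h⟩
  have hYint : ∀ k : ℕ, (∫ y in Y, H k y) = ∫ y in YI, H k y := fun k =>
    setIntegral_congr_set hYae
  have hHIntY : ∀ k : ℕ, k < N + 1 → IntegrableOn (H k) Y := fun k hk =>
    (hHInt k hk).mono_set hYsubYI
  have hGcell : ∀ k : ℕ, ∀ q ∈ cell k ×ˢ Y, G q = H k q.2 := by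
    intro k q hq
    have hq1 : q.1 ∈ Ico ((k:ℝ) * M) (((k:ℝ)+1) * M) := hq.1
    have hfl : ⌊q.1 / c / L⌋ = (k : ℤ) := by
      rw [div_div, ← hMdef]
      exact floor_cell hM k hq1
    have harg : c * ((⌊q.1 / c / L⌋ : ℤ) : ℝ) * L = (k:ℝ) * M := by
      rw [hfl]; push_cast; rw [hMdef]; ring
    simp only [hGdef, hHdef, hFdef, harg]
  have hcellm : ∀ k : ℕ, MeasurableSet (cell k ×ˢ Y) := fun k => measurableSet_Ico.prod hYm
  have hcellInt : ∀ k : ℕ, k < N + 1 → IntegrableOn G (cell k ×ˢ Y) := by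
    intro k hk
    have h1 : IntegrableOn (fun q : ℝ × ℝ × ℝ => H k q.2) (cell k ×ˢ Y) := by
      rw [IntegrableOn, Measure.volume_eq_prod, ← Measure.prod_restrict]
      have h2 : Integrable (fun _ : ℝ => (1:ℝ)) (volume.restrict (cell k)) := by
        refine integrableOn_const (ne_of_lt ?_)
        rw [hcelldef]; exact measure_Ico_lt_top
      have h3 := h2.mul_prod (hHIntY k hk)
      simpa using h3
    exact h1.congr_fun (fun q hq => (hGcell k q hq).symm) (hcellm k)
  have hcellval : ∀ k : ℕ, k < N + 1 →
      (∫ q in cell k ×ˢ Y, G q) = (L / ε) * ∫ z in strip k, F z := by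
    intro k hk
    rw [setIntegral_congr_fun (hcellm k) (hGcell k), Measure.volume_eq_prod]
    have heq : (fun z : ℝ × ℝ × ℝ => H k z.2)
        = fun z : ℝ × ℝ × ℝ => (fun _ : ℝ => (1:ℝ)) z.1 * H k z.2 := by
      funext z; simp
    rw [heq, setIntegral_prod_mul (fun _ : ℝ => (1:ℝ)) (H k) (cell k) Y]
    have hvol : (∫ _x in cell k, (1:ℝ)) = M := by
      rw [setIntegral_const, hcelldef]
      simp only [smul_eq_mul, mul_one]
      rw [Real.volume_real_Ico, show ((k:ℝ)+1) * M - (k:ℝ)*M = M by ring,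
        max_eq_left hM.le]
    rw [hvol, hYint k, hcov k, hMdef]
    field_simp
  have hcelldisj : ∀ i j : ℕ, i ≠ j → Disjoint (cell i) (cell j) := by
    intro i j hij
    rw [hcelldef]
    simp only
    rw [Set.Ico_disjoint_Ico]
    rcases hij.lt_or_gt with h | h
    · have h1 : (i:ℝ) + 1 ≤ j := by exact_mod_cast h
      calc min (((i:ℝ)+1)*M) (((j:ℝ)+1)*M) ≤ ((i:ℝ)+1)*M := min_le_left _ _
        _ ≤ (j:ℝ)*M := by nlinarith
        _ ≤ max ((i:ℝ)*M) ((j:ℝ)*M) := le_max_right _ _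
    · have h1 : (j:ℝ) + 1 ≤ i := by exact_mod_cast h
      calc min (((i:ℝ)+1)*M) (((j:ℝ)+1)*M) ≤ ((j:ℝ)+1)*M := min_le_right _ _
        _ ≤ (i:ℝ)*M := by nlinarith
        _ ≤ max ((i:ℝ)*M) ((j:ℝ)*M) := le_max_left _ _
  have hstripdisj : ∀ i j : ℕ, i ≠ j → Disjoint (strip i) (strip j) := by
    intro i j hij
    refine Set.disjoint_left.mpr ?_
    intro z hzi hzj
    exact Set.disjoint_left.mp (hcelldisj i j hij) hzi.1 hzj.1
  have hIcoU : (⋃ k ∈ Finset.range (N+1), cell k) = Ico (0:ℝ) (M * (↑N + 1)) := by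
    rw [hcelldef]
    have h := iUnion_Ico_mul hM.le (N+1)
    simp only at h ⊢
    rw [h]
    congr 1
    push_cast
    ring
  have hstripU : (⋃ k ∈ Finset.range (N+1), strip k)
      = {z : ℝ × ℝ | z.1 ∈ Ico (0:ℝ) (M * (↑N + 1)) ∧ 0 < z.2 ∧ z.2 < ε * g (z.1 / c)} := by
    ext z
    simp only [mem_iUnion, exists_prop, mem_setOf_eq, hstripdef]
    rw [← hIcoU]
    simp only [mem_iUnion, exists_prop, hcelldef]
    tauto
  have hsum2 : (∑ k ∈ Finset.range (N+1), ∫ z in strip k, F z)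
      = ∫ z in {z : ℝ × ℝ | z.1 ∈ Ico (0:ℝ) (M*(↑N+1)) ∧ 0 < z.2 ∧ z.2 < ε * g (z.1 / c)},
        F z := by
    rw [← hstripU, integral_biUnion_finset (Finset.range (N+1)) (fun k _ => hstripm k)
      (fun i _ j _ hij => hstripdisj i j hij)
      (fun k hk => hstripInt k (Finset.mem_range.mp hk))]
  have hR0ae : {z : ℝ × ℝ | z.1 ∈ Ico (0:ℝ) (M*(↑N+1)) ∧ 0 < z.2 ∧ z.2 < ε * g (z.1 / c)}
      =ᵐ[volume]
      {z : ℝ × ℝ | z.1 ∈ Ioo (0:ℝ) (M*(↑N+1)) ∧ 0 < z.2 ∧ z.2 < ε * g (z.1 / c)} := by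
    rw [MeasureTheory.ae_eq_set]
    constructor
    · apply measure_mono_null (t := {z : ℝ × ℝ | z.1 = 0}) _ (null_fst 0)
      rintro z ⟨⟨⟨h0, h1⟩, h2, h3⟩, hz⟩
      by_contra hne
      exact hz ⟨⟨lt_of_le_of_ne h0 (Ne.symm hne), h1⟩, h2, h3⟩
    · have hsub' : {z : ℝ × ℝ | z.1 ∈ Ioo (0:ℝ) (M*(↑N+1)) ∧ 0 < z.2 ∧ z.2 < ε * g (z.1 / c)}
          ⊆ {z : ℝ × ℝ | z.1 ∈ Ico (0:ℝ) (M*(↑N+1)) ∧ 0 < z.2 ∧ z.2 < ε * g (z.1 / c)} :=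
        fun z hz => ⟨⟨hz.1.1.le, hz.1.2⟩, hz.2⟩
      rw [diff_eq_empty.mpr hsub']
      exact measure_empty
  have hT : MeasurableSet {q : ℝ × ℝ × ℝ | q.1 ∈ Ioo (0:ℝ) (M*(↑N+1))} :=
    measurable_fst measurableSet_Ioo
  have hInter : (Ioo (0:ℝ) 1 ×ˢ Y) ∩ {q : ℝ × ℝ × ℝ | q.1 ∈ Ioo (0:ℝ) (M*(↑N+1))}
      = Ioo (0:ℝ) (M*(↑N+1)) ×ˢ Y := by
    ext q
    constructor
    · rintro ⟨⟨hq1, hy⟩, hqE⟩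
      exact ⟨hqE, hy⟩
    · rintro ⟨hqE, hy⟩
      exact ⟨⟨⟨hqE.1, lt_of_lt_of_le hqE.2 hE1⟩, hy⟩, hqE⟩
  have hprodae : (Ioo (0:ℝ) (M*(↑N+1)) ×ˢ Y : Set (ℝ × ℝ × ℝ))
      =ᵐ[volume] (Ico (0:ℝ) (M*(↑N+1)) ×ˢ Y : Set (ℝ × ℝ × ℝ)) := by
    rw [MeasureTheory.ae_eq_set]
    constructor
    · have hsub' : (Ioo (0:ℝ) (M*(↑N+1)) ×ˢ Y : Set (ℝ × ℝ × ℝ))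
          ⊆ Ico (0:ℝ) (M*(↑N+1)) ×ˢ Y :=
        Set.prod_mono Ioo_subset_Ico_self subset_rfl
      rw [diff_eq_empty.mpr hsub']
      exact measure_empty
    · apply measure_mono_null (t := {q : ℝ × ℝ × ℝ | q.1 = 0}) _ (null_fst 0)
      rintro q ⟨⟨⟨h0, h1⟩, hy⟩, hq⟩
      by_contra hne
      exact hq ⟨⟨lt_of_le_of_ne h0 (Ne.symm hne), h1⟩, hy⟩
  have hprodU : (Ico (0:ℝ) (M*(↑N+1)) ×ˢ Y : Set (ℝ × ℝ × ℝ))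
      = ⋃ k ∈ Finset.range (N+1), cell k ×ˢ Y := by
    rw [← hIcoU]
    ext q
    simp only [mem_prod, mem_iUnion, exists_prop]
    tauto
  have hR0m : MeasurableSet
      {z : ℝ × ℝ | z.1 ∈ Ioo (0:ℝ) (M*(↑N+1)) ∧ 0 < z.2 ∧ z.2 < ε * g (z.1 / c)} := by
    simp only [setOf_and]
    exact (measurable_fst measurableSet_Ioo).inter
      ((measurableSet_lt measurable_const measurable_snd).inter
      (measurableSet_lt measurable_snd
        ((hgc.measurable.comp (measurable_fst.div_const c)).const_mul ε)))
  have hJnonneg : (0:ℝ) ≤ ∫ z in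
      {z : ℝ × ℝ | z.1 ∈ Ioo (0:ℝ) (M*(↑N+1)) ∧ 0 < z.2 ∧ z.2 < ε * g (z.1 / c)}, F z :=
    setIntegral_nonneg hR0m (fun z _ => by simp only [hFdef]; positivity)
  have hmain : (∫ q in (Ioo (0:ℝ) 1 ×ˢ Y),
      Set.indicator {q : ℝ × ℝ × ℝ | q.1 ∈ Ioo (0:ℝ) (M * (↑N + 1))} G q)
      = (L / ε) * ∫ z in
        {z : ℝ × ℝ | z.1 ∈ Ioo (0:ℝ) (M*(↑N+1)) ∧ 0 < z.2 ∧ z.2 < ε * g (z.1 / c)}, F z := by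
    rw [setIntegral_indicator hT, hInter, setIntegral_congr_set hprodae, hprodU,
      integral_biUnion_finset (Finset.range (N+1)) (fun k _ => hcellm k)
        (fun i _ j hj hij => Set.disjoint_left.mpr
          (fun q hqi hqj => Set.disjoint_left.mp (hcelldisj i j hij) hqi.1 hqj.1))
        (fun k hk => hcellInt k (Finset.mem_range.mp hk)),
      Finset.sum_congr rfl (fun k hk => hcellval k (Finset.mem_range.mp hk)),
      ← Finset.mul_sum, hsum2, setIntegral_congr_set hR0ae]
  have hfun : (fun q : ℝ × ℝ × ℝ =>
      |if q.1 ∈ Ioo (0:ℝ) (M * (↑N + 1)) then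
        φ (c * (⌊q.1 / c / L⌋:ℝ) * L + c * q.2.1, ε * q.2.2) else 0| ^ p)
      = Set.indicator {q : ℝ × ℝ × ℝ | q.1 ∈ Ioo (0:ℝ) (M * (↑N + 1))} G := by
    funext q
    rw [Set.indicator_apply]
    by_cases hq : q.1 ∈ Ioo (0:ℝ) (M * (↑N + 1))
    · have hq' : q ∈ {q : ℝ × ℝ × ℝ | q.1 ∈ Ioo (0:ℝ) (M*(↑N+1))} := hq
      rw [if_pos hq, if_pos hq', hGdef]
    · have hq' : q ∉ {q : ℝ × ℝ × ℝ | q.1 ∈ Ioo (0:ℝ) (M*(↑N+1))} := hq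
      rw [if_neg hq, if_neg hq', abs_zero, Real.zero_rpow (ne_of_gt hp0)]
  have hAeq : {q : ℝ × ℝ × ℝ |
      q.1 ∈ Ioo (0:ℝ) 1 ∧ 0 < q.2.1 ∧ q.2.1 < L ∧ 0 < q.2.2 ∧ q.2.2 < g q.2.1}
      = Ioo (0:ℝ) 1 ×ˢ Y := rfl
  refine ⟨?_, ?_, ?_⟩
  · rw [hfun, hAeq]
    rw [IntegrableOn, integrable_indicator_iff hT, IntegrableOn,
      Measure.restrict_restrict hT]
    have hTA : {q : ℝ × ℝ × ℝ | q.1 ∈ Ioo (0:ℝ) (M*(↑N+1))} ∩ (Ioo (0:ℝ) 1 ×ˢ Y)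
        = Ioo (0:ℝ) (M*(↑N+1)) ×ˢ Y := by
      rw [inter_comm]; exact hInter
    rw [hTA]
    have h1 : IntegrableOn G (Ico (0:ℝ) (M*(↑N+1)) ×ˢ Y) := by
      rw [hprodU]
      exact integrableOn_finset_iUnion.mpr
        (fun k hk => hcellInt k (Finset.mem_range.mp hk))
    exact h1.mono_set (Set.prod_mono Ioo_subset_Ico_self subset_rfl)
  · rw [hfun, hAeq, hmain,
      Real.mul_rpow (div_nonneg hL.le hε.le) hJnonneg]
  · apply mul_le_mul_of_nonneg_left _ (Real.rpow_nonneg (div_nonneg hL.le hε.le) _)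
    apply Real.rpow_le_rpow hJnonneg _ (by positivity)
    apply setIntegral_mono_set hφ
    · filter_upwards with z
      simp only [hFdef]
      positivity
    · apply HasSubset.Subset.eventuallyLE
      rintro z ⟨⟨h1, h2⟩, h3, h4⟩
      exact ⟨h1, lt_of_lt_of_le h2 hE1, h3, h4⟩
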